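/- Let C ⊆ ℝⁿ be an open convex set, let F : ℝⁿ → ℝ^m be differentiable on C, and let L_F, L_{∇F} > 0 satisfy ‖F(w) − F(w')‖ ≤ L_F‖w − w'‖ and ‖DF(w) − DF(w')‖_{op} ≤ L_{∇F}‖w − w'‖ for all w, w' ∈ C. Let γ > 0 and M_θ > 0. Then the function (w, θ) ↦ ⟨F(w), θ⟩ + (γ L_F² + L_{∇F} M_θ)‖w‖² + (1/(4γ))‖θ‖² is convex on the convex set C × {θ ∈ ℝ^m : ‖θ‖ ≤ 2M_θ}. -/

import Mathlib

open scoped RealInnerProductSpace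

/-- Quadratic Taylor remainder bound from Lipschitz derivative on a convex set. -/
lemma taylor_quadratic {n m : ℕ} {C : Set (EuclideanSpace ℝ (Fin n))} (hCc : Convex ℝ C)
    {F : EuclideanSpace ℝ (Fin n) → EuclideanSpace ℝ (Fin m)}
    (hdiff : ∀ w ∈ C, DifferentiableAt ℝ F w) {LdF : ℝ}
    (hlip' : ∀ w ∈ C, ∀ w' ∈ C, ‖fderiv ℝ F w - fderiv ℝ F w'‖ ≤ LdF * ‖w - w'‖)
    {x y : EuclideanSpace ℝ (Fin n)} (hx : x ∈ C) (hy : y ∈ C) :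
    ‖F y - F x - fderiv ℝ F x (y - x)‖ ≤ LdF / 2 * ‖y - x‖ ^ 2 := by
  set v := y - x with hv
  set g : ℝ → EuclideanSpace ℝ (Fin m) :=
    fun t => F (x + t • v) - F x - t • (fderiv ℝ F x v) with hg
  have hmem : ∀ t ∈ Set.Icc (0:ℝ) 1, x + t • v ∈ C := fun t ht =>
    hCc.add_smul_sub_mem hx hy ht
  have hg' : ∀ t ∈ Set.Icc (0:ℝ) 1,
      HasDerivAt g ((fderiv ℝ F (x + t • v)) v - fderiv ℝ F x v) t := by
    intro t ht
    have hline : HasDerivAt (fun t : ℝ => x + t • v) v t := by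
      simpa using ((hasDerivAt_id t).smul_const v).const_add x
    have hF : HasDerivAt (fun t => F (x + t • v)) ((fderiv ℝ F (x + t • v)) v) t :=
      (hdiff _ (hmem t ht)).hasFDerivAt.comp_hasDerivAt t hline
    exact (hF.sub_const (F x)).sub
      (by simpa using (hasDerivAt_id t).smul_const (fderiv ℝ F x v) :
        HasDerivAt (fun t : ℝ => t • fderiv ℝ F x v) (fderiv ℝ F x v) t)
  have hbound : ∀ t ∈ Set.Ico (0:ℝ) 1,
      ‖(fderiv ℝ F (x + t • v)) v - fderiv ℝ F x v‖ ≤ (LdF * ‖v‖ ^ 2) * t := by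
    intro t ht
    have h1 : (fderiv ℝ F (x + t • v)) v - fderiv ℝ F x v
        = (fderiv ℝ F (x + t • v) - fderiv ℝ F x) v := by simp
    rw [h1]
    calc ‖(fderiv ℝ F (x + t • v) - fderiv ℝ F x) v‖
        ≤ ‖fderiv ℝ F (x + t • v) - fderiv ℝ F x‖ * ‖v‖ :=
          (fderiv ℝ F (x + t • v) - fderiv ℝ F x).le_opNorm v
      _ ≤ (LdF * ‖x + t • v - x‖) * ‖v‖ :=
          mul_le_mul_of_nonneg_right
            (hlip' _ (hmem t ⟨ht.1, ht.2.le⟩) x hx) (norm_nonneg _)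
      _ = (LdF * ‖v‖ ^ 2) * t := by
          rw [add_sub_cancel_left, norm_smul, Real.norm_eq_abs, abs_of_nonneg ht.1]
          ring
  have hB : ∀ t : ℝ, HasDerivAt (fun t : ℝ => LdF * ‖v‖ ^ 2 / 2 * t ^ 2)
      ((LdF * ‖v‖ ^ 2) * t) t := by
    intro t
    have h := (hasDerivAt_pow 2 t).const_mul (LdF * ‖v‖ ^ 2 / 2)
    exact h.congr_deriv (by simp only [Nat.cast_ofNat]; ring)
  have key := image_norm_le_of_norm_deriv_right_le_deriv_boundary
    (fun t ht => (hg' t ht).continuousAt.continuousWithinAt)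
    (fun t ht => (hg' t ⟨ht.1, ht.2.le⟩).hasDerivWithinAt)
    (by simp [hg]) hB hbound (Set.right_mem_Icc.2 zero_le_one)
  have hxy : x + v = y := by rw [hv]; abel
  rw [hg] at key
  simp only [one_smul, one_pow] at key
  rw [hxy] at key
  calc ‖F y - F x - fderiv ℝ F x (y - x)‖ = ‖F y - F x - fderiv ℝ F x v‖ := by rw [hv]
    _ ≤ LdF * ‖v‖ ^ 2 / 2 * 1 := key
    _ = LdF / 2 * ‖y - x‖ ^ 2 := by rw [hv]; ring

/-- Norm of a convex combination. -/
lemma comb_norm_sq {k : ℕ} {a b : ℝ} (hab : a + b = 1) (x y : EuclideanSpace ℝ (Fin k)) :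
    ‖a • x + b • y‖ ^ 2 = a * ‖x‖ ^ 2 + b * ‖y‖ ^ 2 - a * b * ‖x - y‖ ^ 2 := by
  rw [← real_inner_self_eq_norm_sq, ← real_inner_self_eq_norm_sq,
    ← real_inner_self_eq_norm_sq, ← real_inner_self_eq_norm_sq]
  simp only [inner_add_left, inner_add_right, inner_sub_left, inner_sub_right,
    real_inner_smul_left, real_inner_smul_right]
  rw [real_inner_comm y x]
  linear_combination (a * ⟪x, x⟫ + b * ⟪y, y⟫) * hab

set_option maxHeartbeats 1000000 in
/-- convexity of
`(w, θ) ↦ ⟨F(w), θ⟩ + (γL_F² + L_{∇F}M_θ)‖w‖² + (1/(4γ))‖θ‖²`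
on `C × {θ : ‖θ‖ ≤ 2M_θ}` when `F` and `DF` are Lipschitz on the open convex set `C`. -/
theorem auxiliary_function_convex {n m : ℕ}
    (C : Set (EuclideanSpace ℝ (Fin n))) (hCo : IsOpen C) (hCc : Convex ℝ C)
    (F : EuclideanSpace ℝ (Fin n) → EuclideanSpace ℝ (Fin m))
    (hdiff : ∀ w ∈ C, DifferentiableAt ℝ F w)
    (L_F LdF : ℝ) (hLF : 0 < L_F) (hLdF : 0 < LdF)
    (hlip : ∀ w ∈ C, ∀ w' ∈ C, ‖F w - F w'‖ ≤ L_F * ‖w - w'‖)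
    (hlip' : ∀ w ∈ C, ∀ w' ∈ C, ‖fderiv ℝ F w - fderiv ℝ F w'‖ ≤ LdF * ‖w - w'‖)
    (γ Mθ : ℝ) (hγ : 0 < γ) (hM : 0 < Mθ) :
    ConvexOn ℝ (C ×ˢ Metric.closedBall (0 : EuclideanSpace ℝ (Fin m)) (2 * Mθ))
      (fun p : EuclideanSpace ℝ (Fin n) × EuclideanSpace ℝ (Fin m) =>
        ⟪F p.1, p.2⟫ + (γ * L_F ^ 2 + LdF * Mθ) * ‖p.1‖ ^ 2 +
          (1 / (4 * γ)) * ‖p.2‖ ^ 2) := by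
  constructor
  · exact hCc.prod (convex_closedBall _ _)
  rintro ⟨w, θ⟩ ⟨hw, hθ⟩ ⟨w', θ'⟩ ⟨hw', hθ'⟩ a b ha hb hab
  have hθn : ‖θ‖ ≤ 2 * Mθ := by simpa using mem_closedBall_zero_iff.mp hθ
  have hθ'n : ‖θ'‖ ≤ 2 * Mθ := by simpa using mem_closedBall_zero_iff.mp hθ'
  simp only [Prod.smul_mk, Prod.mk_add_mk, smul_eq_mul]
  set z := a • w + b • w' with hz
  have hzC : z ∈ C := hCc hw hw' ha hb hab
  set D := fderiv ℝ F z with hD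
  set s := ‖w - w'‖ with hs
  set t := ‖θ - θ'‖ with ht
  -- derivative norm bound
  have hDz : ‖D‖ ≤ L_F := by
    refine (hdiff z hzC).hasFDerivAt.le_of_lip' hLF.le ?_
    filter_upwards [hCo.mem_nhds hzC] with x hx using hlip x hx z hzC
  -- vector identities
  have hww : w - z = b • (w - w') := by
    rw [hz, show a = 1 - b by linarith]; module
  have hw'w : w' - z = -(a • (w - w')) := by
    rw [hz, show b = 1 - a by linarith]; module
  -- Taylor bounds
  have hT1 : ‖F w - F z - D (w - z)‖ ≤ LdF / 2 * (b * s) ^ 2 := by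
    have := taylor_quadratic hCc hdiff hlip' hzC hw
    rw [hww] at this ⊢
    calc ‖F w - F z - D (b • (w - w'))‖ ≤ LdF / 2 * ‖b • (w - w')‖ ^ 2 := by
          simpa [hww] using taylor_quadratic hCc hdiff hlip' hzC hw
      _ = LdF / 2 * (b * s) ^ 2 := by
          rw [norm_smul, Real.norm_eq_abs, abs_of_nonneg hb, hs]
  have hT2 : ‖F w' - F z - D (w' - z)‖ ≤ LdF / 2 * (a * s) ^ 2 := by
    calc ‖F w' - F z - D (w' - z)‖ ≤ LdF / 2 * ‖w' - z‖ ^ 2 :=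
          taylor_quadratic hCc hdiff hlip' hzC hw'
      _ = LdF / 2 * (a * s) ^ 2 := by
          rw [hw'w, norm_neg, norm_smul, Real.norm_eq_abs, abs_of_nonneg ha, hs]
  -- inner product bounds
  have hB1 : |⟪F w - F z - D (w - z), θ⟫| ≤ (LdF / 2 * (b * s) ^ 2) * (2 * Mθ) := by
    calc |⟪F w - F z - D (w - z), θ⟫| ≤ ‖F w - F z - D (w - z)‖ * ‖θ‖ :=
          abs_real_inner_le_norm _ _
      _ ≤ (LdF / 2 * (b * s) ^ 2) * (2 * Mθ) :=
          mul_le_mul hT1 hθn (norm_nonneg _) (by positivity)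
  have hB2 : |⟪F w' - F z - D (w' - z), θ'⟫| ≤ (LdF / 2 * (a * s) ^ 2) * (2 * Mθ) := by
    calc |⟪F w' - F z - D (w' - z), θ'⟫| ≤ ‖F w' - F z - D (w' - z)‖ * ‖θ'‖ :=
          abs_real_inner_le_norm _ _
      _ ≤ (LdF / 2 * (a * s) ^ 2) * (2 * Mθ) :=
          mul_le_mul hT2 hθ'n (norm_nonneg _) (by positivity)
  have hB3 : |⟪D (w - w'), θ - θ'⟫| ≤ L_F * s * t := by
    calc |⟪D (w - w'), θ - θ'⟫| ≤ ‖D (w - w')‖ * ‖θ - θ'‖ := abs_real_inner_le_norm _ _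
      _ ≤ (‖D‖ * ‖w - w'‖) * ‖θ - θ'‖ :=
          mul_le_mul_of_nonneg_right (D.le_opNorm _) (norm_nonneg _)
      _ ≤ L_F * s * t := by
          rw [← hs, ← ht]
          exact mul_le_mul_of_nonneg_right
            (mul_le_mul_of_nonneg_right hDz (norm_nonneg _)) (norm_nonneg _)
  have hAM : L_F * s * t ≤ γ * L_F ^ 2 * s ^ 2 + 1 / (4 * γ) * t ^ 2 := by
    have h4 : (0:ℝ) < 4 * γ := by linarith
    rw [← sub_nonneg]
    have key : γ * L_F ^ 2 * s ^ 2 + 1 / (4 * γ) * t ^ 2 - L_F * s * t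
        = (2 * γ * L_F * s - t) ^ 2 / (4 * γ) := by field_simp; ring
    rw [key]
    positivity
  -- algebraic identity
  have hid : a * ⟪F z, θ⟫ + b * ⟪F z, θ'⟫ - (a * ⟪F w, θ⟫ + b * ⟪F w', θ'⟫)
      = -(a * ⟪F w - F z - D (w - z), θ⟫) - b * ⟪F w' - F z - D (w' - z), θ'⟫
        - a * b * ⟪D (w - w'), θ - θ'⟫ := by
    have e1 : ⟪F w - F z - D (w - z), θ⟫
        = ⟪F w, θ⟫ - ⟪F z, θ⟫ - b * ⟪D (w - w'), θ⟫ := by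
      rw [hww, map_smul, inner_sub_left, inner_sub_left, real_inner_smul_left]
    have e2 : ⟪F w' - F z - D (w' - z), θ'⟫
        = ⟪F w', θ'⟫ - ⟪F z, θ'⟫ + a * ⟪D (w - w'), θ'⟫ := by
      rw [hw'w, map_neg, map_smul, inner_sub_left, inner_sub_left, inner_neg_left,
        real_inner_smul_left]
      ring
    have e3 : ⟪D (w - w'), θ - θ'⟫ = ⟪D (w - w'), θ⟫ - ⟪D (w - w'), θ'⟫ :=
      inner_sub_right _ _ _
    rw [e1, e2, e3]; ring
  -- combine
  have k1 : -(a * ⟪F w - F z - D (w - z), θ⟫) ≤ a * ((LdF / 2 * (b * s) ^ 2) * (2 * Mθ)) := by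
    calc -(a * ⟪F w - F z - D (w - z), θ⟫) = a * (-⟪F w - F z - D (w - z), θ⟫) := by ring
      _ ≤ a * ((LdF / 2 * (b * s) ^ 2) * (2 * Mθ)) :=
          mul_le_mul_of_nonneg_left ((neg_le_abs _).trans hB1) ha
  have k2 : -(b * ⟪F w' - F z - D (w' - z), θ'⟫)
      ≤ b * ((LdF / 2 * (a * s) ^ 2) * (2 * Mθ)) := by
    calc -(b * ⟪F w' - F z - D (w' - z), θ'⟫)
        = b * (-⟪F w' - F z - D (w' - z), θ'⟫) := by ring
      _ ≤ b * ((LdF / 2 * (a * s) ^ 2) * (2 * Mθ)) :=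
          mul_le_mul_of_nonneg_left ((neg_le_abs _).trans hB2) hb
  have k3 : -(a * b * ⟪D (w - w'), θ - θ'⟫)
      ≤ (a * b) * (γ * L_F ^ 2 * s ^ 2 + 1 / (4 * γ) * t ^ 2) := by
    calc -(a * b * ⟪D (w - w'), θ - θ'⟫) = (a * b) * (-⟪D (w - w'), θ - θ'⟫) := by ring
      _ ≤ (a * b) * (γ * L_F ^ 2 * s ^ 2 + 1 / (4 * γ) * t ^ 2) :=
          mul_le_mul_of_nonneg_left ((neg_le_abs _).trans (hB3.trans hAM))
            (mul_nonneg ha hb)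
  have halg : a * ((LdF / 2 * (b * s) ^ 2) * (2 * Mθ))
      + b * ((LdF / 2 * (a * s) ^ 2) * (2 * Mθ))
      + (a * b) * (γ * L_F ^ 2 * s ^ 2 + 1 / (4 * γ) * t ^ 2)
      = a * b * ((γ * L_F ^ 2 + LdF * Mθ) * s ^ 2 + 1 / (4 * γ) * t ^ 2) := by
    linear_combination (LdF * Mθ * s ^ 2 * a * b) * hab
  have key' : a * ⟪F z, θ⟫ + b * ⟪F z, θ'⟫
      ≤ a * ⟪F w, θ⟫ + b * ⟪F w', θ'⟫
        + a * b * ((γ * L_F ^ 2 + LdF * Mθ) * s ^ 2 + 1 / (4 * γ) * t ^ 2) := by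
    linarith [hid, k1, k2, k3, halg]
  -- finish
  rw [comb_norm_sq hab w w', comb_norm_sq hab θ θ', inner_add_right,
    real_inner_smul_right, real_inner_smul_right]
  nlinarith [key']
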